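/- For every n ≥ 0 and every word v of length n over {a,b} beginning with the letter a: |ψ(v)|_b ≤ |ψ(v^(n))|_b = F_{n−1} − 1, with equality if and only if v = v^(n) or v = E(d(v^(n))). -/

import Mathlib

def palClosure (w : List Bool) : List Bool :=
  let k := Nat.find (p := fun k => (w.drop k).reverse = w.drop k)
    ⟨w.length, by simp⟩
  w.take k ++ w.drop k ++ (w.take k).reverse

def psi (v : List Bool) : List Bool := v.foldl (fun w x => palClosure (w ++ [x])) []

def E (v : List Bool) : List Bool := v.map (!·)

def mu (x : Bool) (w : List Bool) : List Bool := w.flatMap (fun y => if y = x then [x] else [x, y])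

def muW : List Bool → List Bool → List Bool
  | [], w => w
  | x :: v, w => mu x (muW v w)

def vN (n : ℕ) : List Bool := (List.range n).map (fun i => decide (i % 2 = 1))

def fibF : ℕ → ℕ
  | 0 => 1
  | 1 => 1
  | n + 2 => fibF (n + 1) + fibF n

def HasPeriod (w : List Bool) (p : ℕ) : Prop :=
  0 < p ∧ ∀ i j (hi : i < w.length) (hj : j < w.length),
    i % p = j % p → w.get ⟨i, hi⟩ = w.get ⟨j, hj⟩

noncomputable def minPeriod (w : List Bool) : ℕ := sInf {p | HasPeriod w p}

def dOp : List Bool → List Bool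
  | x :: y :: u => y :: x :: u
  | w => w

def cOp (v : List Bool) : List Bool := (dOp v.reverse).reverse

def contAux : List ℕ → ℕ
  | [] => 1
  | [a] => a
  | a :: b :: t => a * contAux (b :: t) + contAux t

/- ### palindromic closure API -/

noncomputable def pcK (w : List Bool) : ℕ :=
  Nat.find (p := fun k => (w.drop k).reverse = w.drop k) ⟨w.length, by simp⟩

lemma pcK_spec (w : List Bool) : (w.drop (pcK w)).reverse = w.drop (pcK w) :=
  Nat.find_spec (p := fun k => (w.drop k).reverse = w.drop k) ⟨w.length, by simp⟩

lemma pcK_min {w : List Bool} {t : ℕ} (h : (w.drop t).reverse = w.drop t) : pcK w ≤ t :=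
  Nat.find_min' _ h

lemma palClosure_eq (w : List Bool) : palClosure w = w ++ (w.take (pcK w)).reverse := by
  rw [palClosure]
  show w.take (pcK w) ++ w.drop (pcK w) ++ (w.take (pcK w)).reverse = _
  rw [List.take_append_drop]

lemma pcK_le (w : List Bool) : pcK w ≤ w.length := by
  apply pcK_min; simp

lemma short_pal {l : List Bool} (h : l.length ≤ 1) : l.reverse = l := by
  match l, h with
  | [], _ => rfl
  | [a], _ => rfl

lemma pcK_lt {w : List Bool} (hw : w ≠ []) : pcK w + 1 ≤ w.length := by
  have h1 : 1 ≤ w.length := List.length_pos_iff.mpr hw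
  have := pcK_min (w := w) (t := w.length - 1) (short_pal (by simp [List.length_drop]; omega))
  omega

lemma palClosure_length (w : List Bool) : (palClosure w).length = w.length + pcK w := by
  rw [palClosure_eq]; simp [List.length_take, Nat.min_eq_left (pcK_le w)]

lemma palClosure_prefix (w : List Bool) : w <+: palClosure w := by
  rw [palClosure_eq]; exact List.prefix_append _ _

lemma genpal (T D : List Bool) (hD : D.reverse = D) :
    (T ++ D ++ T.reverse).reverse = T ++ D ++ T.reverse := by
  simp [List.reverse_append, hD, List.append_assoc]

lemma palClosure_pal (w : List Bool) : (palClosure w).reverse = palClosure w := by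
  rw [palClosure_eq]
  have := genpal (w.take (pcK w)) (w.drop (pcK w)) (pcK_spec w)
  rwa [List.take_append_drop] at this

lemma palClosure_min {w : List Bool} {t : ℕ} (h : (w.drop t).reverse = w.drop t) :
    (palClosure w).length ≤ w.length + t := by
  rw [palClosure_length]; exact Nat.add_le_add_left (pcK_min h) _

lemma pal_getElem {p : List Bool} (hp : p.reverse = p) {i : ℕ} (hi : i < p.length) :
    p[i] = p[p.length - 1 - i]'(by omega) := by
  rw [← List.getElem_reverse (by simpa using hi), List.getElem_of_eq hp]

lemma rev_eq_of_getElem {p : List Bool}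
    (h : ∀ i (hi : i < p.length), p[p.length - 1 - i]'(by omega) = p[i]) :
    p.reverse = p := by
  apply List.ext_getElem (by simp)
  intro i h1 h2
  rw [List.getElem_reverse]
  exact h i h2

lemma pal_ext_drop {p W : List Bool} (hp : p.reverse = p) (hpre : W <+: p)
    {t : ℕ} (hlen : p.length = W.length + t) (ht : t ≤ W.length) :
    ((W.drop t).reverse = W.drop t) := by
  apply rev_eq_of_getElem
  intro i hi
  simp only [List.length_drop] at hi ⊢
  rw [List.getElem_drop, List.getElem_drop]
  have e1 : ∀ j (hj : j < W.length), W[j] = p[j]'(by omega) := fun j hj => hpre.getElem hj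
  rw [e1 _ (by omega), e1 _ (by omega), pal_getElem hp (by omega)]
  congr 1
  omega

lemma pal_unique {p q W : List Bool} (hp : p.reverse = p) (hq : q.reverse = q)
    (hpW : W <+: p) (hqW : W <+: q) (hlen : p.length = q.length)
    (hsmall : p.length ≤ 2 * W.length) : p = q := by
  apply List.ext_getElem hlen
  intro i h1 h2
  rcases Nat.lt_or_ge i W.length with h | h
  · rw [← hpW.getElem h, ← hqW.getElem h]
  · have hW : p.length - 1 - i < W.length := by omega
    rw [pal_getElem hp h1, pal_getElem hq h2]
    have e1 := hpW.getElem (i := p.length - 1 - i) (by omega)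
    have e2 := hqW.getElem (i := q.length - 1 - i) (by omega)
    rw [← e1, ← e2]
    congr 1
    omega

/- ### mu API -/

lemma mu_nil (x : Bool) : mu x [] = [] := rfl

lemma mu_cons (x y : Bool) (u : List Bool) :
    mu x (y :: u) = (if y = x then [x] else [x, y]) ++ mu x u := rfl

lemma mu_append (x : Bool) (u v : List Bool) : mu x (u ++ v) = mu x u ++ mu x v :=
  List.flatMap_append

lemma mu_single_same (x : Bool) : mu x [x] = [x] := by simp [mu]

lemma mu_single_other (x : Bool) : mu x [!x] = [x, !x] := by simp [mu]

lemma mu_head (x : Bool) {u : List Bool} (hu : u ≠ []) : ∃ r, mu x u = x :: r := by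
  cases u with
  | nil => exact absurd rfl hu
  | cons y u' =>
    rw [mu_cons]
    by_cases h : y = x <;> simp [h]

lemma mu_length (x : Bool) (u : List Bool) : (mu x u).length = u.length + u.count (!x) := by
  induction u with
  | nil => rfl
  | cons y u' ih =>
    rw [mu_cons, List.length_append, ih, List.count_cons]
    cases x <;> cases y <;> simp_all <;> omega

lemma mu_count_x (x : Bool) (u : List Bool) : (mu x u).count x = u.length := by
  induction u with
  | nil => rfl
  | cons y u' ih =>
    rw [mu_cons, List.count_append, ih]
    cases x <;> cases y <;> simp_all [List.count_cons] <;> omega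

lemma mu_count_other (x : Bool) (u : List Bool) : (mu x u).count (!x) = u.count (!x) := by
  induction u with
  | nil => rfl
  | cons y u' ih =>
    rw [mu_cons, List.count_append, ih, List.count_cons]
    cases x <;> cases y <;> simp_all [List.count_cons] <;> omega

-- I1
lemma mu_rev (x : Bool) (q : List Bool) :
    (mu x q ++ [x]).reverse = mu x q.reverse ++ [x] := by
  induction q with
  | nil => rfl
  | cons y q' ih =>
    rw [mu_cons, List.append_assoc, List.reverse_append, ih, List.reverse_cons]
    rw [mu_append, mu_cons, mu_nil]
    by_cases h : y = x <;> simp [h]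

lemma mu_inj (x : Bool) : ∀ {u v : List Bool}, mu x u = mu x v → u = v := by
  intro u
  induction u with
  | nil =>
    intro v h
    cases v with
    | nil => rfl
    | cons z v' =>
      rw [mu_nil, mu_cons] at h
      by_cases hz : z = x <;> simp [hz] at h
  | cons y u' ih =>
    intro v h
    cases v with
    | nil =>
      rw [mu_nil, mu_cons] at h
      by_cases hy : y = x <;> simp [hy] at h
    | cons z v' =>
      rw [mu_cons, mu_cons] at h
      by_cases hy : y = x <;> by_cases hz : z = x
      · rw [if_pos hy, if_pos hz] at h
        simp only [List.cons_append, List.nil_append, List.cons.injEq, true_and] at h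
        rw [hy, hz, ih h]
      · exfalso
        rw [if_pos hy, if_neg hz] at h
        simp only [List.cons_append, List.nil_append, List.cons.injEq, true_and] at h
        rcases Decidable.em (u' = []) with rfl | hne
        · rw [mu_nil] at h; exact List.cons_ne_nil _ _ h.symm
        · obtain ⟨r, hr⟩ := mu_head x hne
          rw [hr] at h
          simp only [List.cons.injEq] at h
          exact hz h.1.symm
      · exfalso
        rw [if_neg hy, if_pos hz] at h
        simp only [List.cons_append, List.nil_append, List.cons.injEq, true_and] at h
        rcases Decidable.em (v' = []) with rfl | hne
        · rw [mu_nil] at h; exact List.cons_ne_nil _ _ h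
        · obtain ⟨r, hr⟩ := mu_head x hne
          rw [hr] at h
          simp only [List.cons.injEq] at h
          exact hy h.1
      · rw [if_neg hy, if_neg hz] at h
        simp only [List.cons_append, List.nil_append, List.cons.injEq, true_and] at h
        rw [h.1, ih h.2]

-- M1
lemma mu_pal_iff (x : Bool) (q : List Bool) :
    (mu x q ++ [x]).reverse = mu x q ++ [x] ↔ q.reverse = q := by
  rw [mu_rev]
  constructor
  · intro h
    exact mu_inj x (by simpa using h)
  · intro h
    rw [h]

-- prefix maps
lemma mu_prefix (x : Bool) {u v : List Bool} (h : u <+: v) : mu x u <+: mu x v := by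
  obtain ⟨t, rfl⟩ := h
  rw [mu_append]
  exact List.prefix_append _ _

lemma mu_prefix_x (x : Bool) {u v : List Bool} (h : u <+: v) :
    mu x u ++ [x] <+: mu x v ++ [x] := by
  obtain ⟨t, rfl⟩ := h
  rcases Decidable.em (t = []) with rfl | hne
  · simp
  · obtain ⟨r, hr⟩ := mu_head x hne
    rw [mu_append, hr]
    exact ⟨r ++ [x], by simp⟩

-- suffix classification
lemma mu_suffix_classify (x : Bool) (u : List Bool) {s : List Bool} (hs : s <:+ mu x u) :
    (∃ t, s = mu x (u.drop t)) ∨ (∃ t z', u.drop t = (!x) :: z' ∧ s = (!x) :: mu x z') := by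
  induction u with
  | nil =>
    left
    exact ⟨0, by simpa [mu_nil] using (List.suffix_nil.mp (by simpa [mu_nil] using hs))⟩
  | cons y u' ih =>
    rw [mu_cons] at hs
    rcases Nat.lt_or_ge (mu x u').length s.length with hlen | hlen
    · -- s strictly longer than mu x u'
      obtain ⟨r, hr⟩ := hs
      have hrl : r.length + s.length
          = (if y = x then [x] else [x, y]).length + (mu x u').length := by
        have := congrArg List.length hr
        simpa using this
      by_cases hy : y = x
      · rw [if_pos hy] at hr hrl
        simp only [List.length_singleton] at hrl
        have : r = [] := List.eq_nil_of_length_eq_zero (by omega)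
        subst this
        simp only [List.nil_append] at hr
        left
        exact ⟨0, by rw [List.drop_zero, mu_cons, if_pos hy, ← hr]⟩
      · have hyx : y = !x := by cases x <;> cases y <;> simp_all
        rw [if_neg hy] at hr hrl
        simp only [List.length_cons, List.length_singleton] at hrl
        cases r with
        | nil =>
          simp only [List.nil_append] at hr
          left
          exact ⟨0, by rw [List.drop_zero, mu_cons, if_neg hy, ← hr]⟩
        | cons a r' =>
          have : r' = [] := List.eq_nil_of_length_eq_zero (by simp at hrl; omega)
          subst this
          simp only [List.cons_append, List.nil_append, List.cons.injEq] at hr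
          right
          refine ⟨0, u', by rw [List.drop_zero, hyx], ?_⟩
          rw [hr.2, hyx]
    · -- s is a suffix of mu x u'
      have hs' : s <:+ mu x u' :=
        List.suffix_of_suffix_length_le hs (List.suffix_append _ _) hlen
      rcases ih hs' with ⟨t, ht⟩ | ⟨t, z', h1, h2⟩
      · exact Or.inl ⟨t + 1, by simpa using ht⟩
      · exact Or.inr ⟨t + 1, z', by simpa using h1, h2⟩

/- ### more aux -/

lemma mu_suffix (x : Bool) {u v : List Bool} (h : u <:+ v) : mu x u <:+ mu x v := by
  obtain ⟨t, rfl⟩ := h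
  rw [mu_append]
  exact List.suffix_append _ _

lemma mu_length_reverse (x : Bool) (u : List Bool) :
    (mu x u.reverse).length = (mu x u).length := by
  simp [mu_length]

lemma suffix_concat {s l : List Bool} {a : Bool} (h : s <:+ l ++ [a]) :
    s = [] ∨ ∃ s', s' <:+ l ∧ s = s' ++ [a] := by
  rcases List.eq_nil_or_concat s with rfl | ⟨s', a', rfl⟩
  · exact Or.inl rfl
  · rw [List.concat_eq_append] at *
    right
    obtain ⟨r, hr⟩ := h
    have hr' : (r ++ s') ++ [a'] = l ++ [a] := by
      rw [List.append_assoc]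
      exact hr
    obtain ⟨h1, h2⟩ := List.append_inj' hr' rfl
    simp only [List.cons.injEq, and_true] at h2
    exact ⟨s', ⟨r, h1⟩, by rw [h2]⟩

lemma mu_drop_suffix (x : Bool) (u : List Bool) {k t : ℕ} (h : k ≤ t) :
    mu x (u.drop t) <:+ mu x (u.drop k) := by
  apply mu_suffix
  rw [← Nat.sub_add_cancel h, Nat.add_comm, ← List.drop_drop]
  exact List.drop_suffix _ _

lemma pal_wrap (a : Bool) (S : List Bool) (hS : S.reverse = S) :
    (a :: (S ++ [a])).reverse = a :: (S ++ [a]) := by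
  simp [List.reverse_append, hS]

/- ### the key lemma (Justin's formula, one step) -/

lemma keyL (x y : Bool) (w : List Bool) :
    palClosure (mu x w ++ [x, y]) = mu x (palClosure (w ++ [y])) ++ [x] := by
  set wy := w ++ [y] with hwy
  set A := palClosure wy with hA
  set W := mu x w ++ [x, y] with hW
  set C := mu x A ++ [x] with hC
  set k' := pcK wy with hk'
  have hwy_ne : wy ≠ [] := by simp [hwy]
  have hk'len : k' + 1 ≤ wy.length := pcK_lt hwy_ne
  have hA_pal : A.reverse = A := palClosure_pal wy
  have hA_pre : wy <+: A := palClosure_prefix wy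
  have hC_pal : C.reverse = C := (mu_pal_iff x A).mpr hA_pal
  have hA_eq : A = wy ++ (wy.take k').reverse := palClosure_eq wy
  have hsplit : (mu x wy).length = (mu x (wy.take k')).length + (mu x (wy.drop k')).length := by
    rw [← List.length_append, ← mu_append, List.take_append_drop]
  have hmuA_len : (mu x A).length = (mu x wy).length + (mu x (wy.take k')).length := by
    rw [hA_eq, mu_append, List.length_append, mu_length_reverse]
  have hDpos : 1 ≤ (mu x (wy.drop k')).length := by
    rw [mu_length, List.length_drop]
    omega
  by_cases hyx : y = x
  · -- W = mu x wy ++ [x]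
    have hWeq : W = mu x wy ++ [x] := by
      rw [hW, hwy, mu_append, hyx, mu_single_same, List.append_assoc]
      rfl
    have hWC : W <+: C := by
      rw [hWeq, hC]
      exact mu_prefix_x x hA_pre
    have hWlen : W.length = (mu x wy).length + 1 := by rw [hWeq]; simp
    have hClen : C.length = (mu x A).length + 1 := by rw [hC]; simp
    have hC2W : C.length ≤ 2 * W.length := by
      rw [hClen, hmuA_len, hWlen]
      have : (mu x (wy.take k')).length ≤ (mu x wy).length := by omega
      omega
    have hWle : W.length ≤ C.length := hWC.length_le
    have hub : (palClosure W).length ≤ C.length := by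
      have hdrop := pal_ext_drop hC_pal hWC (t := C.length - W.length) (by omega) (by omega)
      have := palClosure_min hdrop
      omega
    -- lower bound via palindromic suffixes
    have hbound : ∀ S : List Bool, S.reverse = S → S <:+ mu x wy ++ [x] →
        S.length ≤ (mu x (wy.drop k')).length + 1 := by
      intro S hSpal hSsuf
      rcases suffix_concat hSsuf with rfl | ⟨S', hS'suf, rfl⟩
      · simp
      · rcases mu_suffix_classify x wy hS'suf with ⟨t, rfl⟩ | ⟨t, z', hz1, rfl⟩
        · have hzpal : (wy.drop t).reverse = wy.drop t := (mu_pal_iff x _).mp hSpal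
          have ht : k' ≤ t := pcK_min hzpal
          have := (mu_drop_suffix x wy ht).length_le
          simp only [List.length_append, List.length_singleton]
          omega
        · exfalso
          have h0 : (((!x) :: mu x z') ++ [x]).reverse
              = x :: ((mu x z').reverse ++ [!x]) := by
            simp
          rw [hSpal] at h0
          simp only [List.cons_append, List.cons.injEq] at h0
          exact (Bool.not_ne_self x) h0.1
    have hb := hbound (W.drop (pcK W)) (pcK_spec W)
      (by rw [← hWeq]; exact List.drop_suffix _ _)
    have hSlen : (W.drop (pcK W)).length = W.length - pcK W := by simp
    have hkW : pcK W ≤ W.length := pcK_le W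
    have hlb : C.length ≤ (palClosure W).length := by
      rw [palClosure_length]
      rw [hClen, hmuA_len]
      omega
    have hlen_eq : (palClosure W).length = C.length := le_antisymm hub hlb
    exact pal_unique (palClosure_pal W) hC_pal (palClosure_prefix W) hWC hlen_eq
      (by rw [hlen_eq]; exact hC2W)
  · -- y = !x ; W = mu x wy
    have hy : y = !x := by cases x <;> cases y <;> simp_all
    have hWeq : W = mu x wy := by
      rw [hW, hwy, mu_append, hy, mu_single_other]
    have hWC : W <+: C := by
      rw [hWeq, hC]
      exact (mu_prefix x hA_pre).trans (List.prefix_append _ _)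
    have hWlen : W.length = (mu x wy).length := by rw [hWeq]
    have hClen : C.length = (mu x A).length + 1 := by rw [hC]; simp
    have hC2W : C.length ≤ 2 * W.length := by
      rw [hClen, hmuA_len, hWlen]
      omega
    have hWle : W.length ≤ C.length := hWC.length_le
    have hub : (palClosure W).length ≤ C.length := by
      have hdrop := pal_ext_drop hC_pal hWC (t := C.length - W.length) (by omega) (by omega)
      have := palClosure_min hdrop
      omega
    have hbound : ∀ S : List Bool, S.reverse = S → S <:+ mu x wy →
        S.length + 1 ≤ (mu x (wy.drop k')).length := by
      intro S hSpal hSsuf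
      rcases mu_suffix_classify x wy hSsuf with ⟨t, rfl⟩ | ⟨t, z', hz1, rfl⟩
      · rcases Decidable.em (wy.drop t = []) with hnil | hne
        · rw [hnil, mu_nil]
          simpa using hDpos
        · exfalso
          obtain ⟨r, hr⟩ := mu_head x hne
          have hWconc : mu x wy = (mu x w ++ [x]) ++ [(!x)] := by
            rw [hwy, mu_append, hy, mu_single_other]
            simp
          have hrevpre : (mu x (wy.drop t)).reverse <+: (mu x wy).reverse :=
            List.reverse_prefix.mpr hSsuf
          have hpre2 : mu x (wy.drop t) <+: (mu x wy).reverse := hSpal ▸ hrevpre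
          obtain ⟨rr, hrr⟩ := hpre2
          rw [hWconc, hr] at hrr
          simp only [List.reverse_append, List.reverse_cons, List.reverse_nil,
            List.nil_append, List.cons_append, List.singleton_append,
            List.cons.injEq] at hrr
          exact (Bool.not_ne_self x) hrr.1.symm
      · have hmuz : mu x (wy.drop t) ++ [x] = x :: (((!x) :: mu x z') ++ [x]) := by
          rw [hz1, mu_cons, if_neg (by simp)]
          simp
        have hT : (mu x (wy.drop t) ++ [x]).reverse = mu x (wy.drop t) ++ [x] := by
          rw [hmuz]
          exact pal_wrap x ((!x) :: mu x z') hSpal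
        have hzpal : (wy.drop t).reverse = wy.drop t := (mu_pal_iff x _).mp hT
        have ht : k' ≤ t := pcK_min hzpal
        have hle := (mu_drop_suffix x wy ht).length_le
        have hlen1 : ((!x) :: mu x z').length + 1 = (mu x (wy.drop t)).length := by
          rw [hz1, mu_cons, if_neg (by simp)]
          simp
        omega
    have hb := hbound (W.drop (pcK W)) (pcK_spec W)
      (by rw [← hWeq]; exact List.drop_suffix _ _)
    have hSlen : (W.drop (pcK W)).length = W.length - pcK W := by simp
    have hkW : pcK W ≤ W.length := pcK_le W
    have hlb : C.length ≤ (palClosure W).length := by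
      rw [palClosure_length]
      rw [hClen, hmuA_len]
      omega
    have hlen_eq : (palClosure W).length = C.length := le_antisymm hub hlb
    exact pal_unique (palClosure_pal W) hC_pal (palClosure_prefix W) hWC hlen_eq
      (by rw [hlen_eq]; exact hC2W)

/- ### Justin's formula -/

lemma psi_nil : psi [] = [] := rfl

lemma psi_snoc (v : List Bool) (y : Bool) :
    psi (v ++ [y]) = palClosure (psi v ++ [y]) := by
  simp [psi, List.foldl_append]

lemma palClosure_single (x : Bool) : palClosure [x] = [x] := by
  have h0 : pcK [x] = 0 := Nat.le_zero.mp (pcK_min (by simp))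
  rw [palClosure_eq, h0]
  simp

lemma justin (x : Bool) (u : List Bool) : psi (x :: u) = mu x (psi u) ++ [x] := by
  induction u using List.reverseRecOn with
  | nil =>
    show psi ([] ++ [x]) = mu x (psi []) ++ [x]
    rw [psi_snoc, psi_nil, List.nil_append, palClosure_single]
    rfl
  | append_singleton u y ih =>
    have h1 : x :: (u ++ [y]) = (x :: u) ++ [y] := rfl
    rw [h1, psi_snoc, ih, List.append_assoc]
    have h2 : [x] ++ [y] = [x, y] := rfl
    rw [h2, keyL, ← psi_snoc]

/- ### counting -/

def prF : List Bool → ℕ × ℕ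
  | [] => (1, 1)
  | x :: u => if x then ((prF u).1 + (prF u).2, (prF u).2)
              else ((prF u).1, (prF u).1 + (prF u).2)

lemma count_tf (w : List Bool) : w.count true + w.count false = w.length := by
  induction w with
  | nil => rfl
  | cons a w ih => cases a <;> simp [List.count_cons] <;> omega

lemma psi_count (v : List Bool) :
    (psi v).count true + 1 = (prF v).1 ∧ (psi v).count false + 1 = (prF v).2 := by
  induction v with
  | nil => simp [psi_nil, prF]
  | cons x u ih =>
    obtain ⟨ih1, ih2⟩ := ih
    rw [justin]
    cases x with
    | true =>
      have c1 : (mu true (psi u)).count true = (psi u).length := mu_count_x true (psi u)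
      have c2 : (mu true (psi u)).count false = (psi u).count false := by
        have := mu_count_other true (psi u)
        simpa using this
      have := count_tf (psi u)
      simp only [prF, if_true, List.count_append, c1, c2, List.count_singleton]
      constructor <;> simp <;> omega
    | false =>
      have c1 : (mu false (psi u)).count false = (psi u).length := mu_count_x false (psi u)
      have c2 : (mu false (psi u)).count true = (psi u).count true := by
        have := mu_count_other false (psi u)
        simpa using this
      have := count_tf (psi u)
      simp only [prF, if_false, List.count_append, c1, c2, List.count_singleton]
      constructor <;> simp <;> omega

/- ### fibF facts -/

lemma fibF_pos : ∀ n, 1 ≤ fibF n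
  | 0 => le_refl 1
  | 1 => le_refl 1
  | n + 2 => le_trans (fibF_pos (n + 1)) (Nat.le_add_right _ _)

lemma fibF_two (n : ℕ) : fibF (n + 2) = fibF (n + 1) + fibF n := rfl

lemma fibF_lt (n : ℕ) : fibF (n + 1) < fibF (n + 2) := by
  rw [fibF_two]
  have := fibF_pos n
  omega

lemma fibF_mono (n : ℕ) : fibF n ≤ fibF (n + 1) := by
  cases n with
  | zero => exact le_rfl
  | succ m =>
    rw [fibF_two]
    have := fibF_pos m
    omega

/- ### alternating words -/

def alt : Bool → ℕ → List Bool
  | _, 0 => []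
  | s, n + 1 => s :: alt (!s) n

@[simp] lemma alt_zero (s : Bool) : alt s 0 = [] := rfl
@[simp] lemma alt_succ (s : Bool) (n : ℕ) : alt s (n + 1) = s :: alt (!s) n := rfl

@[simp] lemma alt_length (s : Bool) (n : ℕ) : (alt s n).length = n := by
  induction n generalizing s with
  | zero => rfl
  | succ m ih => simp [ih]

lemma prF_false (u : List Bool) : prF (false :: u) = ((prF u).1, (prF u).1 + (prF u).2) := by
  simp [prF]

lemma prF_true (u : List Bool) : prF (true :: u) = ((prF u).1 + (prF u).2, (prF u).2) := by
  simp [prF]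

lemma prF_alt : ∀ n s, prF (alt s n) = if s then (fibF (n+1), fibF n) else (fibF n, fibF (n+1)) := by
  intro n
  induction n with
  | zero => intro s; cases s <;> rfl
  | succ m ih =>
    intro s
    have hT : fibF (m + 1 + 1) = fibF (m + 1) + fibF m := fibF_two m
    cases s with
    | true =>
      rw [alt_succ, Bool.not_true, prF_true, ih false]
      simp only [if_pos, if_neg, Bool.false_eq_true, ite_false, ite_true]
      rw [Prod.mk.injEq]
      exact ⟨by omega, rfl⟩
    | false =>
      rw [alt_succ, Bool.not_false, prF_false, ih true]
      simp only [if_pos, if_neg, Bool.false_eq_true, ite_false, ite_true]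
      rw [Prod.mk.injEq]
      exact ⟨rfl, by omega⟩

lemma prF_bound (u : List Bool) :
    (prF u).1 ≤ fibF (u.length + 1) ∧ (prF u).2 ≤ fibF (u.length + 1) ∧
      (prF u).1 + (prF u).2 ≤ fibF (u.length + 2) := by
  induction u with
  | nil =>
    refine ⟨le_refl 1, le_refl 1, ?_⟩
    simp
    rfl
  | cons x u ih =>
    obtain ⟨h1, h2, h3⟩ := ih
    have hm := fibF_mono (u.length + 1)
    have hA : fibF (u.length + 1 + 1) = fibF (u.length + 2) := rfl
    have hB : fibF (u.length + 1 + 2) = fibF (u.length + 1 + 1) + fibF (u.length + 1) :=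
      fibF_two (u.length + 1)
    cases x
    · rw [prF_false]
      simp only [List.length_cons]
      refine ⟨by omega, by omega, by omega⟩
    · rw [prF_true]
      simp only [List.length_cons]
      refine ⟨by omega, by omega, by omega⟩

/- ### equality characterization -/

lemma char3 (u : List Bool) :
    (((prF u).1 = fibF (u.length + 1) ∧ (prF u).2 = fibF u.length) ↔ u = alt true u.length) ∧
    (((prF u).1 = fibF u.length ∧ (prF u).2 = fibF (u.length + 1)) ↔ u = alt false u.length) ∧
    ((prF u).1 + (prF u).2 = fibF (u.length + 2) ↔
      (u = alt true u.length ∨ u = alt false u.length)) := by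
  induction u with
  | nil =>
    refine ⟨⟨fun _ => rfl, fun _ => ⟨rfl, rfl⟩⟩, ⟨fun _ => rfl, fun _ => ⟨rfl, rfl⟩⟩,
      ⟨fun _ => Or.inl rfl, fun _ => rfl⟩⟩
  | cons x u ih =>
    obtain ⟨ihA, ihB, ihC⟩ := ih
    obtain ⟨b1, b2, b3⟩ := prF_bound u
    have e1 : fibF (u.length + 1 + 1) = fibF (u.length + 2) := rfl
    have e2 : fibF (u.length + 1 + 2) = fibF (u.length + 1 + 1) + fibF (u.length + 1) :=
      fibF_two (u.length + 1)
    have e3 : fibF (u.length + 2) = fibF (u.length + 1) + fibF u.length := fibF_two u.length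
    have p0 : 1 ≤ fibF u.length := fibF_pos _
    have p1 : 1 ≤ fibF (u.length + 1) := fibF_pos _
    cases x
    · -- x = false : prF = (F, F + G)
      rw [prF_false]
      simp only [List.length_cons]
      have hTgt : alt true (u.length + 1) = true :: alt false u.length := by
        rw [alt_succ, Bool.not_true]
      have hFgt : alt false (u.length + 1) = false :: alt true u.length := by
        rw [alt_succ, Bool.not_false]
      refine ⟨?_, ?_, ?_⟩
      · constructor
        · rintro ⟨h1, h2⟩
          exfalso
          omega
        · intro h
          rw [hTgt] at h
          exact absurd h (by simp)
      · rw [hFgt]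
        constructor
        · rintro ⟨h1, h2⟩
          have : (prF u).1 = fibF (u.length + 1) ∧ (prF u).2 = fibF u.length := by omega
          rw [List.cons_inj_right]
          exact ihA.mp this
        · intro h
          rw [List.cons_inj_right] at h
          obtain ⟨h1, h2⟩ := ihA.mpr h
          omega
      · constructor
        · intro h
          right
          rw [hFgt, List.cons_inj_right]
          apply ihA.mp
          omega
        · intro h
          rcases h with h | h
          · rw [hTgt] at h
            exact absurd h (by simp)
          · rw [hFgt, List.cons_inj_right] at h
            obtain ⟨h1, h2⟩ := ihA.mpr h
            omega
    · -- x = true : prF = (F + G, G)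
      rw [prF_true]
      simp only [List.length_cons]
      have hTgt : alt true (u.length + 1) = true :: alt false u.length := by
        rw [alt_succ, Bool.not_true]
      have hFgt : alt false (u.length + 1) = false :: alt true u.length := by
        rw [alt_succ, Bool.not_false]
      refine ⟨?_, ?_, ?_⟩
      · rw [hTgt]
        constructor
        · rintro ⟨h1, h2⟩
          have : (prF u).1 = fibF u.length ∧ (prF u).2 = fibF (u.length + 1) := by omega
          rw [List.cons_inj_right]
          exact ihB.mp this
        · intro h
          rw [List.cons_inj_right] at h
          obtain ⟨h1, h2⟩ := ihB.mpr h
          omega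
      · constructor
        · rintro ⟨h1, h2⟩
          exfalso
          omega
        · intro h
          rw [hFgt] at h
          exact absurd h (by simp)
      · constructor
        · intro h
          left
          rw [hTgt, List.cons_inj_right]
          apply ihB.mp
          omega
        · intro h
          rcases h with h | h
          · rw [hTgt, List.cons_inj_right] at h
            obtain ⟨h1, h2⟩ := ihB.mpr h
            omega
          · rw [hFgt] at h
            exact absurd h (by simp)

lemma charF (u : List Bool) :
    (prF u).1 = fibF (u.length + 1) ↔
      (u = alt true u.length ∨ ∃ m', u.length = m' + 1 ∧ u = true :: alt true m') := by
  cases u with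
  | nil =>
    constructor
    · intro _
      exact Or.inl rfl
    · intro _
      rfl
  | cons x u' =>
    obtain ⟨b1, b2, b3⟩ := prF_bound u'
    obtain ⟨ihA, ihB, ihC⟩ := char3 u'
    have e1 : fibF (u'.length + 2) = fibF (u'.length + 1) + fibF u'.length :=
      fibF_two u'.length
    have e1' : fibF (u'.length + 1 + 1) = fibF (u'.length + 2) := rfl
    have p0 : 1 ≤ fibF u'.length := fibF_pos _
    have hTgt : alt true (u'.length + 1) = true :: alt false u'.length := by
      rw [alt_succ, Bool.not_true]
    cases x
    · rw [prF_false]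
      simp only [List.length_cons]
      constructor
      · intro h
        exfalso
        omega
      · intro h
        exfalso
        rcases h with h | ⟨m', hm, h⟩
        · rw [hTgt] at h
          exact absurd h (by simp)
        · exact absurd h (by simp)
    · rw [prF_true]
      simp only [List.length_cons]
      constructor
      · intro h
        have := ihC.mp (by omega)
        rcases this with h1 | h1
        · right
          exact ⟨u'.length, rfl, by rw [List.cons_inj_right]; exact h1⟩
        · left
          rw [hTgt, List.cons_inj_right]
          exact h1
      · intro h
        rcases h with h | ⟨m', hm, h⟩
        · rw [hTgt, List.cons_inj_right] at h
          have := ihC.mpr (Or.inr h)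
          omega
        · simp only [Nat.add_right_cancel_iff] at hm
          subst hm
          rw [List.cons_inj_right] at h
          have := ihC.mpr (Or.inl h)
          omega

/- ### vN, E, dOp glue -/

lemma E_cons (x : Bool) (l : List Bool) : E (x :: l) = (!x) :: E l := rfl

lemma E_alt : ∀ n s, E (alt s n) = alt (!s) n := by
  intro n
  induction n with
  | zero => intro s; rfl
  | succ m ih =>
    intro s
    rw [alt_succ, E_cons, ih (!s), alt_succ]

lemma alt_eq_map : ∀ n s, alt s n = (List.range n).map (fun i => xor s (decide (i % 2 = 1))) := by
  intro n
  induction n with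
  | zero => intro s; rfl
  | succ m ih =>
    intro s
    rw [List.range_succ_eq_map, List.map_cons, List.map_map, alt_succ, ih (!s)]
    congr 1
    · simp
    · apply List.map_congr_left
      intro i _
      simp only [Function.comp_apply]
      have hpar : decide ((i + 1) % 2 = 1) = !decide (i % 2 = 1) := by
        rcases Nat.mod_two_eq_zero_or_one i with h | h <;> simp [Nat.add_mod, h]
      rw [hpar]
      cases s <;> cases hd : decide (i % 2 = 1) <;> rfl

lemma vN_alt (n : ℕ) : vN n = alt false n := by
  rw [vN, alt_eq_map n false]
  apply List.map_congr_left
  intro i _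
  simp

/- ### the theorem -/

theorem stmt16 (n : ℕ) (v : List Bool) (hv : v.length = n) (ha : v.head? = some false) :
    (psi v).count true ≤ (psi (vN n)).count true ∧
    (psi (vN n)).count true = fibF n - 1 ∧
    ((psi v).count true = (psi (vN n)).count true ↔
      v = vN n ∨ v = E (dOp (vN n))) := by
  cases v with
  | nil => simp at ha
  | cons x u =>
    have hx : x = false := by simpa using ha
    subst hx
    have hn : n = u.length + 1 := by rw [← hv]; rfl
    subst hn
    -- counts
    have hcv : (psi (false :: u)).count true + 1 = (prF u).1 := by
      have := (psi_count (false :: u)).1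
      rwa [prF_false] at this
    have hvNa : vN (u.length + 1) = alt false (u.length + 1) := vN_alt _
    have hcN : (psi (vN (u.length + 1))).count true + 1 = fibF (u.length + 1) := by
      have h1 := (psi_count (vN (u.length + 1))).1
      rw [hvNa] at h1 ⊢
      rw [prF_alt (u.length + 1) false] at h1
      simpa using h1
    have hb := (prF_bound u).1
    refine ⟨by omega, by omega, ?_⟩
    have hiff1 : (psi (false :: u)).count true = (psi (vN (u.length + 1))).count true ↔
        (prF u).1 = fibF (u.length + 1) := by omega
    rw [hiff1, charF u]
    have hAltF : alt false (u.length + 1) = false :: alt true u.length := by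
      rw [alt_succ, Bool.not_false]
    constructor
    · intro h
      rcases h with h | ⟨m', hm, h⟩
      · left
        rw [hvNa, hAltF, List.cons_inj_right]
        exact h
      · right
        -- u = true :: alt true m', u.length = m' + 1
        cases u with
        | nil => simp at hm
        | cons u0 u1 =>
          have hm' : m' = u1.length := by simpa using hm.symm
          subst hm'
          rw [show ((u0 :: u1).length + 1) = u1.length + 1 + 1 from rfl]
          have hvN2 : vN (u1.length + 1 + 1) = false :: true :: alt false u1.length := by
            rw [vN_alt, alt_succ, Bool.not_false, alt_succ, Bool.not_true]
          rw [hvN2]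
          have hdop : dOp (false :: true :: alt false u1.length)
              = true :: false :: alt false u1.length := rfl
          rw [hdop, E_cons, E_cons, E_alt]
          rw [show (!true) = false from rfl, show (!false) = true from rfl,
            List.cons_inj_right]
          exact h
    · intro h
      rcases h with h | h
      · left
        rw [hvNa, hAltF, List.cons_inj_right] at h
        exact h
      · right
        cases u with
        | nil =>
          exfalso
          -- v = [false], E (dOp (vN 1)) = [true]
          have hvN1 : vN 1 = [false] := by rw [vN_alt]; rfl
          rw [show (([] : List Bool).length + 1) = 1 from rfl, hvN1] at h
          simp [dOp, E] at h
        | cons u0 u1 =>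
          rw [show ((u0 :: u1).length + 1) = u1.length + 1 + 1 from rfl] at h
          have hvN2 : vN (u1.length + 1 + 1) = false :: true :: alt false u1.length := by
            rw [vN_alt, alt_succ, Bool.not_false, alt_succ, Bool.not_true]
          rw [hvN2] at h
          have hdop : dOp (false :: true :: alt false u1.length)
              = true :: false :: alt false u1.length := rfl
          rw [hdop, E_cons, E_cons, E_alt] at h
          rw [show (!true) = false from rfl, show (!false) = true from rfl,
            List.cons_inj_right] at h
          exact ⟨u1.length, by simp, h⟩
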